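/- For every c ∈ (1,2) there exists a constant C > 0 such that for all N ∈ ℕ and all ξ₁, ξ₂ ∈ [-1/2,1/2) with ξ₁ ≠ 0, we have |∑_{n=1}^{N} e^{2πi(ξ₂⌊n^c⌋ + ξ₁ n)}| ≤ C · |ξ₁|⁻¹ · (N^c |ξ₂| + 1). -/

import Mathlib

/-- `e x = e^{2πix}` -/
noncomputable def e (x : ℝ) : ℂ := Complex.exp (2 * Real.pi * Complex.I * x)

lemma e_add (x y : ℝ) : e (x + y) = e x * e y := by
  rw [e, e, e, ← Complex.exp_add]; push_cast; ring_nf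

lemma norm_e (x : ℝ) : ‖e x‖ = 1 := by
  rw [e, Complex.norm_exp]
  simp [Complex.mul_re]

lemma norm_e_sub_one (x : ℝ) : ‖e x - 1‖ = 2 * |Real.sin (Real.pi * x)| := by
  have h : e x = Complex.exp ((2 * Real.pi * x : ℝ) * Complex.I) := by
    rw [e]; push_cast; ring_nf
  rw [h, Complex.exp_mul_I]
  have h2 : Real.pi * x = (2 * Real.pi * x) / 2 := by ring
  rw [h2, Real.abs_sin_half]
  set θ := 2 * Real.pi * x
  rw [Complex.norm_def]
  have : Complex.normSq (Complex.cos θ + Complex.sin θ * Complex.I - 1)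
      = 4 * ((1 - Real.cos θ)/2) := by
    rw [(by rw [Complex.ofReal_cos] : (Complex.cos θ : ℂ) = (Real.cos θ : ℝ)),
      (by rw [Complex.ofReal_sin] : (Complex.sin θ : ℂ) = (Real.sin θ : ℝ)),
      Complex.normSq_apply]
    simp only [Complex.add_re, Complex.sub_re, Complex.add_im, Complex.sub_im,
      Complex.mul_re, Complex.mul_im, Complex.ofReal_re, Complex.ofReal_im,
      Complex.I_re, Complex.I_im, Complex.one_re, Complex.one_im]
    nlinarith [Real.sin_sq_add_cos_sq θ]
  rw [this, show (4:ℝ) * ((1 - Real.cos θ)/2) = 2^2 * ((1 - Real.cos θ)/2) by norm_num,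
    Real.sqrt_mul (by positivity), Real.sqrt_sq (by norm_num)]

lemma norm_e_sub_e (x y : ℝ) : ‖e x - e y‖ ≤ 2 * Real.pi * |x - y| := by
  have h : e x - e y = e y * (e (x - y) - 1) := by
    rw [mul_sub, ← e_add, mul_one]; ring_nf
  rw [h, norm_mul, norm_e, one_mul, norm_e_sub_one]
  have := Real.abs_sin_le_abs (x := Real.pi * (x - y))
  rw [abs_mul, abs_of_pos Real.pi_pos] at this
  linarith

lemma norm_e_sub_one_ge {ξ : ℝ} (hξ : |ξ| ≤ 1/2) : 4 * |ξ| ≤ ‖e ξ - 1‖ := by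
  rw [norm_e_sub_one]
  have h1 : |Real.pi * ξ| ≤ Real.pi / 2 := by
    rw [abs_mul, abs_of_pos Real.pi_pos]
    nlinarith [Real.pi_pos]
  have := Real.mul_abs_le_abs_sin h1
  rw [abs_mul, abs_of_pos Real.pi_pos] at this
  have hπ := Real.pi_pos
  have h2 : 2 * |ξ| = 2 / Real.pi * (Real.pi * |ξ|) := by field_simp
  nlinarith [this]

lemma e_nat_mul (ξ : ℝ) (k : ℕ) : e (ξ * k) = (e ξ) ^ k := by
  rw [e, e, ← Complex.exp_nat_mul]
  congr 1; push_cast; ring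

lemma geom_bound {ξ : ℝ} (hle : |ξ| ≤ 1/2) (hne : ξ ≠ 0) (n : ℕ) :
    ‖∑ j ∈ Finset.range n, e (ξ * (j + 1 : ℕ))‖ ≤ 1 / (2 * |ξ|) := by
  have hz : ∀ j : ℕ, e (ξ * (j + 1 : ℕ)) = (e ξ) ^ (j + 1) := fun j => e_nat_mul ξ (j+1)
  simp only [hz, pow_succ, ← Finset.sum_mul]
  have habs : (0:ℝ) < |ξ| := abs_pos.mpr hne
  have hlb : 4 * |ξ| ≤ ‖e ξ - 1‖ := norm_e_sub_one_ge hle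
  have hz1 : e ξ ≠ 1 := by
    intro h
    rw [h, sub_self, norm_zero] at hlb
    linarith
  rw [geom_sum_eq hz1, norm_mul, norm_e, mul_one]
  rw [norm_div]
  have hnum : ‖(e ξ) ^ n - 1‖ ≤ 2 := by
    calc ‖(e ξ) ^ n - 1‖ ≤ ‖(e ξ)^n‖ + ‖(1:ℂ)‖ := norm_sub_le _ _
    _ = 2 := by rw [norm_pow, norm_e]; norm_num
  calc ‖(e ξ)^n - 1‖ / ‖e ξ - 1‖ ≤ 2 / (4 * |ξ|) :=
        div_le_div₀ (by norm_num) hnum (by linarith) hlb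
  _ = 1 / (2 * |ξ|) := by field_simp; ring

lemma sum_Icc_one (F : ℕ → ℂ) (N : ℕ) :
    ∑ n ∈ Finset.Icc 1 N, F n = ∑ i ∈ Finset.range N, F (i+1) := by
  induction N with
  | zero => simp
  | succ n ih => rw [Finset.sum_Icc_succ_top (by omega), ih, Finset.sum_range_succ]

theorem stmt0 (c : ℝ) (hc1 : 1 < c) (hc2 : c < 2) :
    ∃ C > (0 : ℝ), ∀ (N : ℕ) (ξ₁ ξ₂ : ℝ),
      ξ₁ ∈ Set.Ico (-(1/2) : ℝ) (1/2) → ξ₂ ∈ Set.Ico (-(1/2) : ℝ) (1/2) → ξ₁ ≠ 0 →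
      ‖∑ n ∈ Finset.Icc 1 N,
          e (ξ₂ * (⌊(n : ℝ) ^ c⌋ : ℝ) + ξ₁ * n)‖ ≤
        C * |ξ₁|⁻¹ * ((N : ℝ) ^ c * |ξ₂| + 1) := by
  refine ⟨Real.pi, Real.pi_pos, fun N ξ₁ ξ₂ h1 h2 hne => ?_⟩
  obtain ⟨h1a, h1b⟩ := h1
  obtain ⟨h2a, h2b⟩ := h2
  have hξ1 : |ξ₁| ≤ 1/2 := abs_le.mpr ⟨h1a, h1b.le⟩
  have hξ2 : |ξ₂| ≤ 1/2 := abs_le.mpr ⟨h2a, h2b.le⟩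
  have habs1 : (0:ℝ) < |ξ₁| := abs_pos.mpr hne
  have hπ := Real.pi_pos
  have hrhs_nonneg : (0:ℝ) ≤ (N : ℝ) ^ c * |ξ₂| := by positivity
  rcases Nat.eq_zero_or_pos N with hN | hN
  · subst hN
    rw [show Finset.Icc 1 0 = (∅ : Finset ℕ) from Finset.Icc_eq_empty (by omega),
      Finset.sum_empty, norm_zero]
    positivity
  -- setup
  set f : ℕ → ℂ := fun i => e (ξ₂ * (⌊((i+1:ℕ) : ℝ) ^ c⌋ : ℝ)) with hf
  set g : ℕ → ℂ := fun i => e (ξ₁ * ((i+1:ℕ) : ℝ)) with hg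
  have hsplit : ∑ n ∈ Finset.Icc 1 N, e (ξ₂ * (⌊(n : ℝ) ^ c⌋ : ℝ) + ξ₁ * n)
      = ∑ i ∈ Finset.range N, f i * g i := by
    rw [sum_Icc_one]
    exact Finset.sum_congr rfl fun i _ => e_add _ _
  rw [hsplit]
  have habel := Finset.sum_range_by_parts f g N
  simp only [smul_eq_mul] at habel
  rw [habel]
  set G : ℕ → ℂ := fun n => ∑ j ∈ Finset.range n, g j with hG
  have hGbound : ∀ n, ‖G n‖ ≤ 1 / (2 * |ξ₁|) := fun n => geom_bound hξ1 hne n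
  -- difference bound
  set φ : ℕ → ℝ := fun i => (⌊((i+1:ℕ) : ℝ) ^ c⌋ : ℝ) with hφ
  have hφmono : ∀ i, φ i ≤ φ (i+1) := by
    intro i
    simp only [hφ]
    have h : ((i+1:ℕ) : ℝ) ^ c ≤ ((i+1+1:ℕ) : ℝ) ^ c :=
      Real.rpow_le_rpow (by positivity) (by push_cast; linarith) (by linarith)
    exact_mod_cast Int.floor_le_floor h
  have hdiff : ∀ i, ‖f (i+1) - f i‖ ≤ 2 * Real.pi * |ξ₂| * (φ (i+1) - φ i) := by
    intro i
    have := norm_e_sub_e (ξ₂ * φ (i+1)) (ξ₂ * φ i)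
    have heq : |ξ₂ * φ (i+1) - ξ₂ * φ i| = |ξ₂| * (φ (i+1) - φ i) := by
      rw [← mul_sub, abs_mul, abs_of_nonneg (sub_nonneg.mpr (hφmono i))]
    simp only [hf, hφ] at this ⊢
    rw [heq] at this
    calc ‖_‖ ≤ 2 * Real.pi * (|ξ₂| * (φ (i+1) - φ i)) := this
    _ = 2 * Real.pi * |ξ₂| * (φ (i+1) - φ i) := by ring
  have hsum_diff : ∑ i ∈ Finset.range (N-1), ‖f (i+1) - f i‖
      ≤ 2 * Real.pi * |ξ₂| * (N : ℝ) ^ c := by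
    calc ∑ i ∈ Finset.range (N-1), ‖f (i+1) - f i‖
        ≤ ∑ i ∈ Finset.range (N-1), 2 * Real.pi * |ξ₂| * (φ (i+1) - φ i) :=
          Finset.sum_le_sum fun i _ => hdiff i
    _ = 2 * Real.pi * |ξ₂| * (φ (N-1) - φ 0) := by
          rw [← Finset.mul_sum, Finset.sum_range_sub]
    _ ≤ 2 * Real.pi * |ξ₂| * (N : ℝ) ^ c := by
          apply mul_le_mul_of_nonneg_left _ (by positivity)
          have h0 : φ 0 = 1 := by
            simp only [hφ]; norm_num [Real.one_rpow]
          have hN1 : ((N-1+1:ℕ) : ℝ) = (N : ℝ) := by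
            congr 1; omega
          have : φ (N-1) ≤ (N:ℝ)^c := by
            simp only [hφ, hN1]
            exact Int.floor_le _
          linarith
  -- combine
  calc ‖f (N-1) * G N - ∑ i ∈ Finset.range (N-1), (f (i+1) - f i) * G (i+1)‖
      ≤ ‖f (N-1) * G N‖ + ‖∑ i ∈ Finset.range (N-1), (f (i+1) - f i) * G (i+1)‖ :=
        norm_sub_le _ _
  _ ≤ 1 / (2*|ξ₁|) + ∑ i ∈ Finset.range (N-1), ‖(f (i+1) - f i) * G (i+1)‖ := by
        gcongr
        · rw [norm_mul, hf, norm_e, one_mul]; exact hGbound N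
        · exact norm_sum_le _ _
  _ ≤ 1 / (2*|ξ₁|) + ∑ i ∈ Finset.range (N-1), ‖f (i+1) - f i‖ * (1/(2*|ξ₁|)) := by
        gcongr with i hi
        rw [norm_mul]
        exact mul_le_mul_of_nonneg_left (hGbound (i+1)) (norm_nonneg _)
  _ = 1 / (2*|ξ₁|) + (∑ i ∈ Finset.range (N-1), ‖f (i+1) - f i‖) * (1/(2*|ξ₁|)) := by
        rw [Finset.sum_mul]
  _ ≤ 1 / (2*|ξ₁|) + (2 * Real.pi * |ξ₂| * (N : ℝ) ^ c) * (1/(2*|ξ₁|)) := by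
        gcongr
  _ ≤ Real.pi * |ξ₁|⁻¹ * ((N : ℝ) ^ c * |ξ₂| + 1) := by
        rw [one_div, mul_inv]
        have h3 := Real.pi_gt_three
        have hA : (0:ℝ) < |ξ₁|⁻¹ := by positivity
        nlinarith [mul_le_mul_of_nonneg_right h3.le hA.le, hA]
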